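/- Let E be a real normed vector space, ι a finite index set, and θ₀ ∈ E. Let p, r, q : E → ι → ℝ be such that each coordinate function θ ↦ p θ i, θ ↦ r θ i and θ ↦ q θ i is differentiable at θ₀ with Fréchet derivatives Dpᵢ, Drᵢ and Dqᵢ, that all coordinates of p θ₀, r θ₀, q θ₀ are positive, and that ∑ᵢ p θ i = 1 and ∑ᵢ r θ i = 1 for all θ in a neighborhood of θ₀. Then the map θ ↦ KL(p θ ‖ r θ) + KL(r θ ‖ q θ) is differentiable at θ₀ with Fréchet derivative ∑ᵢ log(p θ₀ i / r θ₀ i) • Dpᵢ + ∑ᵢ ( − (p θ₀ i / r θ₀ i) + log(r θ₀ i / q θ₀ i) ) • Drᵢ − ∑ᵢ (r θ₀ i / q θ₀ i) • Dqᵢ. -/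

import Mathlib

open Filter

theorem kl_term_hasFDerivAt
    {E : Type*} [NormedAddCommGroup E] [NormedSpace ℝ E] {θ₀ : E}
    {f g : E → ℝ} {Df Dg : E →L[ℝ] ℝ}
    (hf : HasFDerivAt f Df θ₀) (hg : HasFDerivAt g Dg θ₀)
    (hf0 : 0 < f θ₀) (hg0 : 0 < g θ₀) :
    HasFDerivAt (fun θ => f θ * Real.log (f θ / g θ))
      ((Real.log (f θ₀ / g θ₀) + 1) • Df - (f θ₀ / g θ₀) • Dg) θ₀ := by
  have hfe : ∀ᶠ θ in nhds θ₀, 0 < f θ := hf.continuousAt.eventually (eventually_gt_nhds hf0)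
  have hge : ∀ᶠ θ in nhds θ₀, 0 < g θ := hg.continuousAt.eventually (eventually_gt_nhds hg0)
  have h1 : HasFDerivAt (fun θ => f θ * (Real.log (f θ) - Real.log (g θ)))
      (f θ₀ • (((f θ₀)⁻¹ • Df) - ((g θ₀)⁻¹ • Dg)) + (Real.log (f θ₀) - Real.log (g θ₀)) • Df)
      θ₀ := hf.mul ((hf.log hf0.ne').sub (hg.log hg0.ne'))
  have heq : (fun θ => f θ * Real.log (f θ / g θ)) =ᶠ[nhds θ₀]
      (fun θ => f θ * (Real.log (f θ) - Real.log (g θ))) := by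
    filter_upwards [hfe, hge] with θ h1 h2
    rw [Real.log_div h1.ne' h2.ne']
  have h2 := h1.congr_of_eventuallyEq heq
  have hEq : (Real.log (f θ₀ / g θ₀) + 1) • Df - (f θ₀ / g θ₀) • Dg =
      f θ₀ • (((f θ₀)⁻¹ • Df) - ((g θ₀)⁻¹ • Dg)) + (Real.log (f θ₀) - Real.log (g θ₀)) • Df := by
    ext x
    simp only [ContinuousLinearMap.sub_apply, ContinuousLinearMap.add_apply,
      ContinuousLinearMap.smul_apply, smul_eq_mul]
    rw [Real.log_div hf0.ne' hg0.ne']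
    field_simp
    ring
  rw [hEq]
  exact h2

theorem bridged_kl_hasFDerivAt
    {E : Type*} [NormedAddCommGroup E] [NormedSpace ℝ E]
    {ι : Type*} [Fintype ι] (θ₀ : E)
    (p r q : E → ι → ℝ) (Dp Dr Dq : ι → E →L[ℝ] ℝ)
    (hp : ∀ i, HasFDerivAt (fun θ => p θ i) (Dp i) θ₀)
    (hr : ∀ i, HasFDerivAt (fun θ => r θ i) (Dr i) θ₀)
    (hq : ∀ i, HasFDerivAt (fun θ => q θ i) (Dq i) θ₀)
    (hppos : ∀ i, 0 < p θ₀ i) (hrpos : ∀ i, 0 < r θ₀ i) (hqpos : ∀ i, 0 < q θ₀ i)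
    (hpsum : ∀ᶠ θ in nhds θ₀, ∑ i, p θ i = 1)
    (hrsum : ∀ᶠ θ in nhds θ₀, ∑ i, r θ i = 1) :
    HasFDerivAt
      (fun θ => (∑ i, p θ i * Real.log (p θ i / r θ i)) +
        (∑ i, r θ i * Real.log (r θ i / q θ i)))
      ((∑ i, Real.log (p θ₀ i / r θ₀ i) • Dp i) +
        (∑ i, (-(p θ₀ i / r θ₀ i) + Real.log (r θ₀ i / q θ₀ i)) • Dr i) -
        (∑ i, (r θ₀ i / q θ₀ i) • Dq i)) θ₀ := by
  have hDp0 : (∑ i, Dp i) = 0 := by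
    have h1 : HasFDerivAt (fun θ => ∑ i, p θ i) (∑ i, Dp i) θ₀ :=
      HasFDerivAt.fun_sum (fun i _ => hp i)
    have h2 : HasFDerivAt (fun θ => ∑ i, p θ i) (0 : E →L[ℝ] ℝ) θ₀ :=
      (hasFDerivAt_const (1:ℝ) θ₀).congr_of_eventuallyEq hpsum
    exact h1.unique h2
  have hDr0 : (∑ i, Dr i) = 0 := by
    have h1 : HasFDerivAt (fun θ => ∑ i, r θ i) (∑ i, Dr i) θ₀ :=
      HasFDerivAt.fun_sum (fun i _ => hr i)
    have h2 : HasFDerivAt (fun θ => ∑ i, r θ i) (0 : E →L[ℝ] ℝ) θ₀ :=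
      (hasFDerivAt_const (1:ℝ) θ₀).congr_of_eventuallyEq hrsum
    exact h1.unique h2
  have h1 : HasFDerivAt (fun θ => ∑ i, p θ i * Real.log (p θ i / r θ i))
      (∑ i, ((Real.log (p θ₀ i / r θ₀ i) + 1) • Dp i - (p θ₀ i / r θ₀ i) • Dr i)) θ₀ :=
    HasFDerivAt.fun_sum (fun i _ => kl_term_hasFDerivAt (hp i) (hr i) (hppos i) (hrpos i))
  have h2 : HasFDerivAt (fun θ => ∑ i, r θ i * Real.log (r θ i / q θ i))
      (∑ i, ((Real.log (r θ₀ i / q θ₀ i) + 1) • Dr i - (r θ₀ i / q θ₀ i) • Dq i)) θ₀ :=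
    HasFDerivAt.fun_sum (fun i _ => kl_term_hasFDerivAt (hr i) (hq i) (hrpos i) (hqpos i))
  have h3 := h1.fun_add h2
  refine h3.congr_fderiv (Eq.symm ?_)
  have hpx : ∀ x : E, (∑ i, Dp i x) = 0 := by
    intro x
    have := congrArg (fun L : E →L[ℝ] ℝ => L x) hDp0
    simpa using this
  have hrx : ∀ x : E, (∑ i, Dr i x) = 0 := by
    intro x
    have := congrArg (fun L : E →L[ℝ] ℝ => L x) hDr0
    simpa using this
  ext x
  simp only [ContinuousLinearMap.add_apply, ContinuousLinearMap.sub_apply,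
    ContinuousLinearMap.coe_sum', Finset.sum_apply, ContinuousLinearMap.smul_apply,
    smul_eq_mul, add_mul, neg_mul, one_mul, sub_eq_iff_eq_add]
  simp only [Finset.sum_add_distrib, Finset.sum_sub_distrib, hpx, hrx, add_zero,
    div_eq_mul_inv, Finset.sum_neg_distrib]
  ring
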